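/- For n ≥ 2, the polar Legendre polynomial P_n satisfies the differential equation (x² - 1) P_n''(x) + 2(x + 1) P_n'(x) - n(n+1) P_n(x) = 0. -/

import Mathlib

open intervalIntegral Finset Polynomial

/-- The `n`-th Legendre polynomial (as a function), via the Rodrigues formula,
normalized so that `legendreP n 1 = 1`. -/
noncomputable def legendreP (n : ℕ) : ℝ → ℝ :=
  fun x => (1 / (2 ^ n * (n.factorial : ℝ))) * iteratedDeriv n (fun y => (y ^ 2 - 1) ^ n) x

/-- `Qpoly n x = -∫_x^1 L_{n-1}(t) dt`. -/
noncomputable def Qpoly (n : ℕ) : ℝ → ℝ :=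
  fun x => -∫ t in x..(1 : ℝ), legendreP (n - 1) t

lemma iterDeriv_poly (p : Polynomial ℝ) (k : ℕ) :
    iteratedDeriv k (fun y => p.eval y) = fun x => (derivative^[k] p).eval x := by
  induction k with
  | zero => simp [iteratedDeriv_zero]
  | succ k ih =>
      rw [iteratedDeriv_succ, ih]
      funext x
      rw [Function.iterate_succ_apply']
      exact Polynomial.deriv (𝕜 := ℝ) (p := derivative^[k] p)

lemma iterDeriv_X_mul (q : Polynomial ℝ) (k : ℕ) :
    derivative^[k + 1] (X * q) =
      X * derivative^[k + 1] q + C ((k : ℝ) + 1) * derivative^[k] q := by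
  induction k with
  | zero => simp [derivative_mul]; ring
  | succ k ih =>
      rw [Function.iterate_succ_apply', ih,
        Function.iterate_succ_apply' derivative (k+1) q,
        Function.iterate_succ_apply' derivative k q]
      simp only [derivative_add, derivative_mul, derivative_X, derivative_C, C_add, C_1,
        one_mul, mul_one, Nat.cast_add, Nat.cast_one, derivative_ofNat, derivative_natCast, derivative_zero, derivative_one, Nat.cast_zero, zero_mul, mul_zero, zero_add, add_zero, sub_zero]
      ring

lemma iterDeriv_sq_mul (q : Polynomial ℝ) (k : ℕ) :
    derivative^[k + 2] ((X ^ 2 - 1) * q) =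
      (X ^ 2 - 1) * derivative^[k + 2] q + C (2 * ((k : ℝ) + 2)) * X * derivative^[k + 1] q
        + C (((k : ℝ) + 2) * ((k : ℝ) + 1)) * derivative^[k] q := by
  induction k with
  | zero =>
      show derivative (derivative _) = _
      simp only [derivative_mul, derivative_sub, derivative_one, derivative_X_pow,
        derivative_add, derivative_X, derivative_C, C_add, C_mul, C_1, C_0, map_ofNat,
        Nat.cast_ofNat, Nat.cast_one, one_mul, Function.iterate_zero_apply, Function.iterate_one,
        Function.iterate_succ_apply', derivative_ofNat, derivative_natCast, derivative_zero, derivative_one, Nat.cast_zero, zero_mul, mul_zero, zero_add, add_zero, sub_zero]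
      push_cast
      simp only [map_one, one_mul]
      ring
  | succ k ih =>
      rw [Function.iterate_succ_apply', ih,
        Function.iterate_succ_apply' derivative (k+2) q,
        Function.iterate_succ_apply' derivative (k+1) q,
        Function.iterate_succ_apply' derivative k q]
      simp only [derivative_add, derivative_mul, derivative_sub, derivative_one,
        derivative_X_pow, derivative_X, derivative_C, C_add, C_mul, C_1, C_0, map_ofNat,
        Nat.cast_add, Nat.cast_one, Nat.cast_ofNat, derivative_ofNat, derivative_natCast, derivative_zero, derivative_one, Nat.cast_zero, zero_mul, mul_zero, zero_add, add_zero, sub_zero]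
      push_cast
      ring

lemma iterDeriv_C_mul (a : ℝ) (q : Polynomial ℝ) (k : ℕ) :
    derivative^[k] (C a * q) = C a * derivative^[k] q := by
  induction k with
  | zero => rfl
  | succ k ih => rw [Function.iterate_succ_apply', ih, Function.iterate_succ_apply',
      derivative_mul, derivative_C]; ring

/-- Legendre ODE for the Rodrigues polynomial. -/
lemma legendre_ODE (n : ℕ) (hn : 1 ≤ n) :
    (X ^ 2 - 1) * derivative (derivative (derivative^[n] ((X ^ 2 - 1 : Polynomial ℝ) ^ n)))
      + C 2 * X * derivative (derivative^[n] ((X ^ 2 - 1 : Polynomial ℝ) ^ n))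
      - C ((n : ℝ) * ((n : ℝ) + 1)) * derivative^[n] ((X ^ 2 - 1 : Polynomial ℝ) ^ n) = 0 := by
  obtain ⟨m, rfl⟩ : ∃ m, n = m + 1 := ⟨n - 1, (Nat.succ_pred_eq_of_pos hn).symm⟩
  set u : Polynomial ℝ := (X ^ 2 - 1) ^ (m + 1) with hu
  have hbase : (X ^ 2 - 1) * derivative u = C (2 * ((m : ℝ) + 1)) * (X * u) := by
    rw [hu, derivative_pow]
    simp only [derivative_sub, derivative_one, derivative_X_pow, C_add, C_mul, C_1, C_0,
      map_ofNat, Nat.cast_add, Nat.cast_one, Nat.cast_ofNat, sub_zero]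
    push_cast
    rw [pow_succ]
    ring
  have hiter := congrArg (derivative^[m + 2]) hbase
  rw [iterDeriv_C_mul] at hiter
  have hL : derivative^[m + 2] ((X ^ 2 - 1) * derivative u) =
      (X ^ 2 - 1) * derivative^[m + 2] (derivative u)
        + C (2 * ((m : ℝ) + 2)) * X * derivative^[m + 1] (derivative u)
        + C (((m : ℝ) + 2) * ((m : ℝ) + 1)) * derivative^[m] (derivative u) :=
    iterDeriv_sq_mul (derivative u) m
  have hR : derivative^[m + 2] (X * u) =
      X * derivative^[m + 2] u + C (((m : ℕ) : ℝ) + 1 + 1) * derivative^[m + 1] u := by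
    have h := iterDeriv_X_mul u (m + 1)
    push_cast at h ⊢
    exact h
  rw [hL, hR] at hiter
  have e1 : derivative^[m + 2] (derivative u) = derivative (derivative (derivative^[m+1] u)) := by
    rw [← Function.iterate_succ_apply derivative (m+2) u,
      Function.iterate_succ_apply' derivative (m+2) u,
      Function.iterate_succ_apply' derivative (m+1) u]
  have e2 : derivative^[m + 1] (derivative u) = derivative (derivative^[m+1] u) := by
    rw [← Function.iterate_succ_apply derivative (m+1) u,
      Function.iterate_succ_apply' derivative (m+1) u]
  have e3 : derivative^[m] (derivative u) = derivative^[m+1] u :=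
    (Function.iterate_succ_apply derivative m u).symm
  have e4 : derivative^[m + 2] u = derivative (derivative^[m+1] u) := by
    rw [Function.iterate_succ_apply' derivative (m+1) u]
  rw [e1, e2, e3, e4] at hiter
  simp only [C_add, C_mul, C_1, C_0, map_ofNat, Nat.cast_add, Nat.cast_one] at hiter ⊢
  push_cast at hiter
  linear_combination hiter

theorem stmt9 (n : ℕ) (hn : 2 ≤ n) (P : Polynomial ℝ) (hdeg : P.degree = n)
    (hdef : ∀ x : ℝ, -((n : ℝ) + 1) * ∫ t in x..(1 : ℝ), legendreP n t = (x - 1) * P.eval x)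
    (x : ℝ) :
    (x ^ 2 - 1) * (Polynomial.derivative (Polynomial.derivative P)).eval x +
      2 * (x + 1) * (Polynomial.derivative P).eval x - (n : ℝ) * ((n : ℝ) + 1) * P.eval x = 0 := by
  set V : Polynomial ℝ := derivative^[n] ((X ^ 2 - 1) ^ n) with hV
  set c : ℝ := 1 / (2 ^ n * (n.factorial : ℝ)) with hc
  -- legendreP n as polynomial evaluation
  have hLP : legendreP n = fun x => c * V.eval x := by
    funext y
    unfold legendreP
    congr 1
    have h : (fun y : ℝ => (y ^ 2 - 1) ^ n) = fun y => (((X ^ 2 - 1 : Polynomial ℝ)) ^ n).eval y := by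
      funext z; simp
    rw [h, iterDeriv_poly]
  have hcont : Continuous (legendreP n) := by
    rw [hLP]; exact continuous_const.mul (Polynomial.continuous _)
  -- derivative of hdef
  have hE : P + (X - 1) * derivative P = C (((n : ℝ) + 1) * c) * V := by
    apply Polynomial.funext
    intro r
    have h1 : HasDerivAt (fun y : ℝ => (y - 1) * P.eval y)
        (((X - 1) * P : Polynomial ℝ).derivative.eval r) r := by
      have := Polynomial.hasDerivAt ((X - 1) * P) r
      simpa using this
    have h2 : HasDerivAt (fun y : ℝ => -((n : ℝ) + 1) * ∫ t in y..(1:ℝ), legendreP n t)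
        (((n : ℝ) + 1) * legendreP n r) r := by
      have hI : HasDerivAt (fun y : ℝ => ∫ t in (1:ℝ)..y, legendreP n t) (legendreP n r) r :=
        (hcont.integral_hasStrictDerivAt 1 r).hasDerivAt
      have h := hI.const_mul ((n : ℝ) + 1)
      have h' : (fun y : ℝ => -((n : ℝ) + 1) * ∫ t in y..(1:ℝ), legendreP n t)
          = fun y : ℝ => ((n : ℝ) + 1) * ∫ t in (1:ℝ)..y, legendreP n t := by
        funext y
        rw [intervalIntegral.integral_symm]
        ring
      rw [h']
      exact h
    have hfun : (fun y : ℝ => -((n : ℝ) + 1) * ∫ t in y..(1:ℝ), legendreP n t)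
        = fun y : ℝ => (y - 1) * P.eval y := funext hdef
    rw [hfun] at h2
    have h3 := h1.unique h2
    rw [hLP] at h3
    simp only [derivative_mul, derivative_sub, derivative_X, derivative_one, sub_zero, one_mul,
      eval_add, eval_mul, eval_sub, eval_X, eval_one] at h3
    simp only [eval_add, eval_mul, eval_sub, eval_X, eval_one, eval_C]
    linear_combination h3
  have hODE := legendre_ODE n (by omega)
  rw [← hV] at hODE
  have hE1 := congrArg derivative hE
  have hE2 := congrArg derivative hE1
  simp only [derivative_add, derivative_mul, derivative_sub, derivative_X, derivative_one,
    derivative_C, zero_mul, mul_zero, add_zero, zero_add, sub_zero, zero_sub, one_mul,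
    mul_one] at hE1 hE2
  -- the key polynomial identity
  set G : Polynomial ℝ := (X ^ 2 - 1) * derivative (derivative P)
      + C 2 * (X + 1) * derivative P - C ((n : ℝ) * ((n : ℝ) + 1)) * P with hG
  have hDG : derivative ((X - 1) * G) = 0 := by
    rw [hG]
    simp only [derivative_mul, derivative_add, derivative_sub, derivative_X, derivative_one,
      derivative_C, derivative_X_pow, zero_mul, mul_zero, add_zero, zero_add, sub_zero,
      one_mul, mul_one, Nat.cast_ofNat, map_ofNat, derivative_ofNat]
    simp only [map_mul, map_ofNat, C_add, C_1, C_0] at hE hE1 hE2 hODE ⊢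
    push_cast
    linear_combination (X^2 - 1 : Polynomial ℝ) * hE2 + 2 * X * hE1
      - (C (n : ℝ) * (C (n : ℝ) + 1)) * hE + ((C (n:ℝ) + 1) * C c) * hODE
  have hconst : (X - 1) * G = C (((X - 1) * G).coeff 0) :=
    eq_C_of_derivative_eq_zero hDG
  have hzero : (X - 1) * G = 0 := by
    have h1 : ((X - 1) * G).eval 1 = 0 := by simp
    rw [hconst] at h1 ⊢
    simp only [eval_C] at h1
    rw [h1, map_zero]
  have hG0 : G = 0 := by
    rcases mul_eq_zero.mp hzero with h | h
    · exfalso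
      have h2 : (X - 1 : Polynomial ℝ).eval 0 = 0 := by rw [h]; simp
      simp at h2
    · exact h
  have hfin := congrArg (Polynomial.eval x) hG0
  rw [hG] at hfin
  simp only [eval_add, eval_sub, eval_mul, eval_pow, eval_X, eval_one, eval_C, eval_zero] at hfin
  linear_combination hfin
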